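/- arXiv:1201.5471 — 3 statements merged into one kernel-verified Lean document; each statement's English description precedes it below -/
import Mathlib

section
/- Let Y be a real Banach space, F ⊆ Y and A ⊆ Y* bounded sets. If the set of restrictions A|_{cl_{w*}(F)} (where cl_{w*}(F) is the weak* closure of F in Y**) is relatively countably compact in C(cl_{w*}(F)) with the topology of pointwise convergence, then for all sequences (y_n) in F and (y*_m) in A for which all the involved iterated limits exist, lim_m lim_n y*_m(y_n) = lim_n lim_m y*_m(y_n). -/
open Filter Topology Metric Bornology

noncomputable section

variable {X : Type*} [NormedAddCommGroup X] [NormedSpace ℝ X]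

/-- Topology of pointwise convergence on a set `D` of functionals. -/
def ptwTop (D : Set (X →L[ℝ] ℝ)) : TopologicalSpace X :=
  TopologicalSpace.induced (fun x (d : D) => (d : X →L[ℝ] ℝ) x) Pi.topologicalSpace

/-- Weak-star topology on the dual of `X`. -/
def wstarTop (X : Type*) [NormedAddCommGroup X] [NormedSpace ℝ X] :
    TopologicalSpace (X →L[ℝ] ℝ) :=
  TopologicalSpace.induced (fun f (x : X) => f x) Pi.topologicalSpace

/-- Weak-star closure of a set of functionals. -/
def wstarClosure (A : Set (X →L[ℝ] ℝ)) : Set (X →L[ℝ] ℝ) :=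
  @closure _ (wstarTop X) A

/-- Weak topology on `X`. -/
def weakTop (X : Type*) [NormedAddCommGroup X] [NormedSpace ℝ X] :
    TopologicalSpace X :=
  TopologicalSpace.induced (fun x (f : X →L[ℝ] ℝ) => f x) Pi.topologicalSpace

/-- `aco_∞(A)`: absolutely convex series combinations of elements of `A`. -/
def acoInf (A : Set X) : Set X :=
  {x | ∃ (α : ℕ → ℝ) (u : ℕ → X), (∀ n, u n ∈ A) ∧ Summable (fun n => |α n|) ∧
    (∑' n, |α n|) = 1 ∧ HasSum (fun n => α n • u n) x}

/-- absolutely convex hull -/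
def aco (A : Set X) : Set X := convexHull ℝ (A ∪ -A)

/-- subspace topology -/
def subTop {α : Type*} (t : TopologicalSpace α) (s : Set α) : TopologicalSpace s :=
  TopologicalSpace.induced (Subtype.val : s → α) t

lemma real_eq_of_cluster {u : ℕ → ℝ} {c L : ℝ}
    (h : MapClusterPt c atTop u) (h' : Tendsto u atTop (𝓝 L)) : c = L :=
  eq_of_nhds_neBot (h.clusterPt.mono h')

/-- Grothendieck's double limit criterion (easy direction):
if the restrictions of `A` to the weak* closure of `F` in the bidual form a relatively
countably compact subset of `C(cl_w*(F))` with the pointwise topology, then the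
double limit interchange holds for sequences from `F` and `A`. -/
theorem stmt0 {Y : Type*} [NormedAddCommGroup Y] [NormedSpace ℝ Y] [CompleteSpace Y]
    (F : Set Y) (A : Set (Y →L[ℝ] ℝ))
    (hF : IsBounded F) (hA : IsBounded A)
    (K : Set ((Y →L[ℝ] ℝ) →L[ℝ] ℝ))
    (hK : K = @closure _ (wstarTop (Y →L[ℝ] ℝ)) ((NormedSpace.inclusionInDoubleDual ℝ Y) '' F))
    -- relative countable compactness of `A|_K` in `(C(K), τ_p)`:
    (hcc : ∀ a : ℕ → (Y →L[ℝ] ℝ), (∀ m, a m ∈ A) →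
      ∃ g : K → ℝ, @Continuous _ _ (subTop (wstarTop (Y →L[ℝ] ℝ)) K) _ g ∧
        MapClusterPt g atTop (fun m => fun φ : K => (φ : (Y →L[ℝ] ℝ) →L[ℝ] ℝ) (a m))) :
    ∀ (y : ℕ → Y) (ys : ℕ → (Y →L[ℝ] ℝ)), (∀ n, y n ∈ F) → (∀ m, ys m ∈ A) →
      ∀ (a b : ℕ → ℝ) (L₁ L₂ : ℝ),
        (∀ m, Tendsto (fun n => ys m (y n)) atTop (𝓝 (a m))) →
        Tendsto a atTop (𝓝 L₁) →
        (∀ n, Tendsto (fun m => ys m (y n)) atTop (𝓝 (b n))) →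
        Tendsto b atTop (𝓝 L₂) →
        L₁ = L₂ := by
  intro y ys hy hys a b L₁ L₂ ham haL hbn hbL
  letI τ : TopologicalSpace ((Y →L[ℝ] ℝ) →L[ℝ] ℝ) := wstarTop (Y →L[ℝ] ℝ)
  have hτ : τ = (inferInstance : TopologicalSpace (WeakDual ℝ (Y →L[ℝ] ℝ))) := rfl
  set J := NormedSpace.inclusionInDoubleDual ℝ Y with hJ
  have hmemK : ∀ n, J (y n) ∈ K := fun n => by
    rw [hK]; exact subset_closure (Set.mem_image_of_mem _ (hy n))
  obtain ⟨g, hg, hgcl⟩ := hcc ys hys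
  -- compactness of K
  have hKcomp : @IsCompact _ τ K := by
    rw [hK]
    show IsCompact (closure (J '' F : Set (WeakDual ℝ (Y →L[ℝ] ℝ))))
    obtain ⟨r, hr⟩ := hF.subset_closedBall 0
    have hball : IsCompact (WeakDual.toStrongDual ⁻¹' closedBall 0 r :
        Set (WeakDual ℝ (Y →L[ℝ] ℝ))) := WeakDual.isCompact_closedBall (𝕜 := ℝ) 0 r
    have hsub : (J '' F : Set (WeakDual ℝ (Y →L[ℝ] ℝ)))
        ⊆ WeakDual.toStrongDual ⁻¹' closedBall 0 r := by
      rintro _ ⟨x, hx, rfl⟩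
      show dist (J x) (0 : StrongDual ℝ (StrongDual ℝ Y)) ≤ r; refine (dist_zero_right (J x)).trans_le ?_
      calc ‖WeakDual.toStrongDual (J x)‖
          ≤ ‖x‖ := NormedSpace.double_dual_bound ℝ Y x
        _ ≤ r := by simpa [dist_zero_right] using hr hx
    exact hball.of_isClosed_subset isClosed_closure (closure_minimal hsub hball.isClosed)
  -- cluster point ψ of the sequence J (y n) in K
  have hle : map (fun n => J (y n)) atTop ≤ 𝓟 K := by
    exact le_principal_iff.mpr (mem_map.mpr (Eventually.of_forall hmemK))
  obtain ⟨ψ, hψK, hψ⟩ := @IsCompact.exists_clusterPt _ τ _ hKcomp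
    (map (fun n => J (y n)) atTop) (map_neBot) hle
  have hψ' : @MapClusterPt _ τ _ ψ atTop (fun n => J (y n)) := hψ
  -- step 1 : ψ (ys m) = a m
  have h1 : ∀ m, ψ (ys m) = a m := by
    intro m
    have hev : @Continuous _ _ τ _ (fun φ : (Y →L[ℝ] ℝ) →L[ℝ] ℝ => φ (ys m)) :=
      WeakDual.eval_continuous (𝕜 := ℝ) (ys m)
    have := hψ'.continuousAt_comp (hev.continuousAt)
    refine real_eq_of_cluster this ?_
    have : (fun n => (J (y n)) (ys m)) = fun n => ys m (y n) := rfl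
    simpa [Function.comp_def, this] using ham m
  -- subtype versions
  letI σ : TopologicalSpace K := subTop τ K
  have hind : @IsInducing _ _ σ τ (Subtype.val : K → _) := @IsInducing.mk _ _ σ τ _ rfl
  set u' : ℕ → K := fun n => ⟨J (y n), hmemK n⟩ with hu'
  have hψsub : @MapClusterPt _ σ _ (⟨ψ, hψK⟩ : K) atTop u' := by
    rw [@mapClusterPt_def]
    refine (hind.mapClusterPt_iff (x := ⟨ψ, hψK⟩) (l := map u' atTop)).mp ?_
    have : map (Subtype.val : K → _) (map u' atTop) = map (fun n => J (y n)) atTop := by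
      rw [map_map]; rfl
    show ClusterPt ψ (map Subtype.val (map u' atTop))
    rw [this]; exact hψ
  -- step 2 : g (J (y n)) = b n
  have h2 : ∀ n, g (u' n) = b n := by
    intro n
    have hevn : @MapClusterPt _ _ _ (g (u' n)) atTop
        (fun m => (fun φ : K => (φ : (Y →L[ℝ] ℝ) →L[ℝ] ℝ) (ys m)) (u' n)) := by
      have hproj : Continuous (fun h : K → ℝ => h (u' n)) := continuous_apply _
      exact hgcl.continuousAt_comp hproj.continuousAt
    refine real_eq_of_cluster hevn ?_
    have : (fun m => ((u' n : (Y →L[ℝ] ℝ) →L[ℝ] ℝ)) (ys m)) = fun m => ys m (y n) := rfl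
    simpa [this] using hbn n
  -- step 3 : g ⟨ψ⟩ = L₂ (continuity of g along cluster)
  have h3 : g ⟨ψ, hψK⟩ = L₂ := by
    have := hψsub.continuousAt_comp (hg.continuousAt (x := ⟨ψ, hψK⟩))
    refine real_eq_of_cluster this ?_
    have heq : (g ∘ u') = b := funext h2
    rw [heq]; exact hbL
  -- step 4 : g ⟨ψ⟩ = L₁ (pointwise cluster at ψ)
  have h4 : g ⟨ψ, hψK⟩ = L₁ := by
    have hproj : Continuous (fun h : K → ℝ => h ⟨ψ, hψK⟩) := continuous_apply _
    have := hgcl.continuousAt_comp hproj.continuousAt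
    refine real_eq_of_cluster this ?_
    have heq : (fun m => (ψ : (Y →L[ℝ] ℝ) →L[ℝ] ℝ) (ys m)) = a := funext h1
    show Tendsto (fun m => (ψ : (Y →L[ℝ] ℝ) →L[ℝ] ℝ) (ys m)) atTop (𝓝 L₁)
    rw [heq]; exact haL
  rw [← h4, h3]
end
end

section
/- Every bounded linear functional on a Banach space X attains its norm on the unit ball B(X) if and only if B(X) is a boundary for X* (as a subset of B(X**)); in this case, if additionally B(X*) is compact in the topology of pointwise convergence on B(X), then one may conclude via the boundary theorem that B(X*) is weakly compact, i.e. X is reflexive. -/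
open Filter Topology Metric Bornology

noncomputable section

variable {X : Type*} [NormedAddCommGroup X] [NormedSpace ℝ X]

/-- if every `x* ∈ X*` attains its norm on `B(X)` (equivalently, the
canonical image of `B(X)` in `B(X**)` is a boundary for `X*`), then — assuming the
boundary theorem for the space `X*` — the dual unit ball `B(X*)` is weakly
compact (i.e. `X` is reflexive). -/
theorem stmt14 {X : Type*} [NormedAddCommGroup X] [NormedSpace ℝ X] [CompleteSpace X]
    -- every functional attains its norm on `B(X)`:
    (hatt : ∀ f : X →L[ℝ] ℝ, ∃ x ∈ Metric.closedBall (0 : X) 1, f x = ‖f‖)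
    -- the boundary theorem applied to the Banach space `X*`:
    (hboundary : ∀ B : Set ((X →L[ℝ] ℝ) →L[ℝ] ℝ), B ⊆ Metric.closedBall 0 1 →
      (∀ f : X →L[ℝ] ℝ, ∃ b ∈ B, b f = ‖f‖) →
      ∀ A : Set (X →L[ℝ] ℝ), IsBounded A →
        @IsClosed _ (weakTop (X →L[ℝ] ℝ)) A →
        @IsCompact _ (ptwTop B) A →
        @IsCompact _ (weakTop (X →L[ℝ] ℝ)) A) :
    @IsCompact _ (weakTop (X →L[ℝ] ℝ)) (Metric.closedBall (0 : X →L[ℝ] ℝ) 1) := by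
    classical
  set J := NormedSpace.inclusionInDoubleDual ℝ X with hJdef
  set B : Set ((X →L[ℝ] ℝ) →L[ℝ] ℝ) := J '' Metric.closedBall 0 1 with hBdef
  apply hboundary B
  · rintro _ ⟨x, hx, rfl⟩
    rw [Metric.mem_closedBall, dist_zero_right] at hx
    show dist (J x) 0 ≤ 1
    refine (dist_zero_right (J x)).trans_le ?_
    exact (NormedSpace.double_dual_bound ℝ X x).trans hx
  · intro f
    obtain ⟨x, hx, hfx⟩ := hatt f
    exact ⟨J x, ⟨x, hx, rfl⟩, hfx⟩
  · exact Metric.isBounded_closedBall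
  · -- weakly closed
    have hcont : ∀ x : X,
        @Continuous _ _ (weakTop (X →L[ℝ] ℝ)) _ (fun f : X →L[ℝ] ℝ => f x) :=
      fun x => @Continuous.comp _ _ _ (weakTop (X →L[ℝ] ℝ)) _ _
        (fun f : X →L[ℝ] ℝ => fun g : (X →L[ℝ] ℝ) →L[ℝ] ℝ => g f)
        (fun h : ((X →L[ℝ] ℝ) →L[ℝ] ℝ) → ℝ => h (J x))
        (continuous_apply ((J x : (X →L[ℝ] ℝ) →L[ℝ] ℝ))) continuous_induced_dom
    have hset : Metric.closedBall (0 : X →L[ℝ] ℝ) 1 =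
        ⋂ x : X, (fun f : X →L[ℝ] ℝ => f x) ⁻¹' {t : ℝ | ‖t‖ ≤ 1 * ‖x‖} := by
      ext f
      simp only [Metric.mem_closedBall, dist_zero_right, Set.mem_iInter,
        Set.mem_preimage, Set.mem_setOf_eq]
      exact ⟨fun h x => f.le_of_opNorm_le h x,
        fun h => f.opNorm_le_bound zero_le_one h⟩
    rw [hset]
    refine @isClosed_iInter _ _ (weakTop _) _ fun x => ?_
    exact @IsClosed.preimage _ _ (weakTop (X →L[ℝ] ℝ)) _
      (fun f : X →L[ℝ] ℝ => f x) (hcont x) {t : ℝ | ‖t‖ ≤ 1 * ‖x‖}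
      (isClosed_le continuous_norm continuous_const)
  · -- ptwTop-compact via Banach-Alaoglu
    have hc := WeakDual.isCompact_closedBall (𝕜 := ℝ) (E := X) 0 1
    have hcont : Continuous[_, ptwTop B]
        (fun f : WeakDual ℝ X => (WeakDual.toStrongDual f : X →L[ℝ] ℝ)) := by
      rw [ptwTop, continuous_induced_rng]
      apply continuous_pi
      rintro ⟨_, x, hx, rfl⟩
      exact WeakDual.eval_continuous x
    have himg : (fun f : WeakDual ℝ X => (WeakDual.toStrongDual f : X →L[ℝ] ℝ)) ''
        (WeakDual.toStrongDual ⁻¹' Metric.closedBall (0 : X →L[ℝ] ℝ) 1) =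
        Metric.closedBall 0 1 :=
      Set.image_preimage_eq _ (WeakDual.toStrongDual (𝕜 := ℝ) (E := X)).surjective
    rw [← himg]
    exact @IsCompact.image _ _ _ (ptwTop B) _ _ hc hcont
end
end

section
/- Let K be a compact Hausdorff space. Then C(K) with the topology τ_p of pointwise convergence on K is angelic: every relatively countably compact subset A of (C(K), τ_p) is relatively compact, and every point in the τ_p-closure of such a set A is the τ_p-limit of a sequence from A. -/
open Filter Topology

noncomputable section

/-- `C(K)` as a type: continuous real functions on `K`. -/
def Cp (K : Type*) [TopologicalSpace K] : Type _ := {g : K → ℝ // Continuous g}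

/-- `C(K)` equipped with the topology `τ_p` of pointwise convergence. -/
instance (K : Type*) [TopologicalSpace K] : TopologicalSpace (Cp K) :=
  TopologicalSpace.induced (fun h : Cp K => h.1) Pi.topologicalSpace

namespace Stmt19Aux

/-- prefix recursion machinery -/
def preSeq {α : Type*} (step : ℕ → (ℕ → α) → α) (j : α) : ℕ → ℕ → α
  | 0 => fun _ => j
  | (n+1) => fun m => if m = n then step n (preSeq step j n) else preSeq step j n m

def mkSeq {α : Type*} (step : ℕ → (ℕ → α) → α) (j : α) (n : ℕ) : α := preSeq step j (n+1) n

lemma preSeq_eq_mkSeq {α : Type*} (step : ℕ → (ℕ → α) → α) (j : α) :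
    ∀ n k, k < n → preSeq step j n k = mkSeq step j k := by
  intro n
  induction n with
  | zero => omega
  | succ n ih =>
    intro k hk
    by_cases h : k = n
    · subst h; rfl
    · have hk' : k < n := by omega
      have : preSeq step j (n+1) k = preSeq step j n k := by simp [preSeq, h]
      rw [this, ih k hk']

lemma mkSeq_eq {α : Type*} (step : ℕ → (ℕ → α) → α) (j : α) (n : ℕ) :
    mkSeq step j n = step n (preSeq step j n) := by simp [mkSeq, preSeq]

variable {K : Type*} [TopologicalSpace K]

lemma continuous_val : Continuous (fun h : Cp K => h.1) := continuous_induced_dom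

lemma continuous_eval (x : K) : Continuous (fun h : Cp K => h.1 x) :=
  (continuous_apply x).comp continuous_val

lemma inducing_val : IsInducing (fun h : Cp K => h.1) := ⟨rfl⟩

lemma embedding_val : IsEmbedding (fun h : Cp K => h.1) :=
  ⟨inducing_val, fun a b hab => Subtype.ext hab⟩

/-- cluster point of convergent sequence is the limit -/
lemma cluster_eq {α : Type*} [TopologicalSpace α] [T2Space α] {u : ℕ → α} {a b : α}
    (hc : MapClusterPt a atTop u) (hl : Tendsto u atTop (𝓝 b)) : a = b := by
  have h1 : ClusterPt a (map u atTop) := hc.clusterPt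
  have h2 : NeBot (𝓝 a ⊓ 𝓝 b) := h1.neBot.mono (inf_le_inf_left _ hl)
  exact eq_of_nhds_neBot h2

lemma cluster_mem_closed {α : Type*} [TopologicalSpace α] {u : ℕ → α} {a : α} {C : Set α}
    (hc : MapClusterPt a atTop u) (hC : IsClosed C) (hu : ∀ n, u n ∈ C) : a ∈ C := by
  have h1 : ClusterPt a (map u atTop) := hc.clusterPt
  have h2 : map u atTop ≤ 𝓟 C := le_principal_iff.2 (mem_map.2 (Eventually.of_forall hu))
  have := mem_closure_iff_clusterPt.2 (h1.mono h2)
  rwa [hC.closure_eq] at this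

lemma isClosed_eps (ε c : ℝ) : IsClosed {t : ℝ | ε ≤ |t - c|} :=
  isClosed_le continuous_const ((continuous_id.sub continuous_const).abs)

lemma tendsto_of_abs_lt {a : ℕ → ℝ} {c : ℝ} {N : ℕ}
    (h : ∀ n ≥ N, |a n - c| < 1/(n+1)) : Tendsto a atTop (𝓝 c) := by
  rw [Metric.tendsto_atTop]
  intro ε hε
  obtain ⟨M, hM⟩ := exists_nat_gt (1/ε)
  refine ⟨max N M, fun n hn => ?_⟩
  have hN : N ≤ n := le_trans (le_max_left _ _) hn
  have hMn : (M:ℝ) ≤ n := Nat.cast_le.2 (le_trans (le_max_right _ _) hn)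
  have h1 : |a n - c| < 1/(n+1) := h n hN
  have h2 : (1:ℝ)/(n+1) < ε := by
    rw [div_lt_iff₀ (by positivity)]
    have := (div_lt_iff₀ hε).1 hM
    nlinarith
  rw [Real.dist_eq]
  linarith

lemma exists_approx {A : Set (Cp K)} {g : K → ℝ}
    (hg : g ∈ closure ((fun h : Cp K => h.1) '' A)) {S : Set K} (hS : S.Finite)
    {δ : ℝ} (hδ : 0 < δ) : ∃ f ∈ A, ∀ x ∈ S, |f.1 x - g x| < δ := by
  classical
  set U : Set (K → ℝ) := {u | ∀ x ∈ S, |u x - g x| < δ} with hU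
  have hUeq : U = ⋂ x ∈ S, (fun u : K → ℝ => u x) ⁻¹' Metric.ball (g x) δ := by
    ext u; simp [hU, Metric.mem_ball, Real.dist_eq]
  have hUopen : IsOpen U := by
    rw [hUeq]
    exact hS.isOpen_biInter fun x _ => (Metric.isOpen_ball).preimage (continuous_apply x)
  have hgU : g ∈ U := fun x _ => by simpa using hδ
  obtain ⟨u, huU, hu⟩ := (mem_closure_iff.1 hg) U hUopen hgU
  obtain ⟨f, hfA, rfl⟩ := hu
  exact ⟨f, hfA, huU⟩

lemma exists_net [CompactSpace K] (Φ : ℕ → K → ℝ) (hΦ : ∀ j, Continuous (Φ j)) (n : ℕ)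
    {δ : ℝ} (hδ : 0 < δ) :
    ∃ T : Finset K, ∀ x : K, ∃ y ∈ T, ∀ j ≤ n, |Φ j x - Φ j y| < δ := by
  classical
  set U : K → Set K := fun z => {x | ∀ j ≤ n, |Φ j x - Φ j z| < δ} with hUdef
  have hUopen : ∀ z, IsOpen (U z) := by
    intro z
    have : U z = ⋂ j ∈ Finset.range (n+1), (Φ j) ⁻¹' Metric.ball (Φ j z) δ := by
      ext x; simp [hUdef, Metric.mem_ball, Real.dist_eq, Nat.lt_succ_iff]
    rw [this]
    exact isOpen_biInter_finset fun j _ => (Metric.isOpen_ball).preimage (hΦ j)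
  have hcov : Set.univ ⊆ ⋃ z : K, U z := by
    intro x _
    exact Set.mem_iUnion.2 ⟨x, fun j _ => by simpa using hδ⟩
  obtain ⟨t, ht⟩ := isCompact_univ.elim_finite_subcover U hUopen hcov
  refine ⟨t, fun x => ?_⟩
  obtain ⟨z, hz, hxz⟩ := Set.mem_iUnion₂.1 (ht (Set.mem_univ x))
  exact ⟨z, hz, hxz⟩


/-- Grothendieck: any pointwise-closure point of a relatively countably compact set
of continuous functions is continuous. -/
lemma continuous_of_mem_closure [CompactSpace K] {A : Set (Cp K)}
    (hcc : ∀ u : ℕ → Cp K, (∀ n, u n ∈ A) → ∃ h : Cp K, MapClusterPt h atTop u)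
    {g : K → ℝ} (hg : g ∈ closure ((fun h : Cp K => h.1) '' A)) : Continuous g := by
  classical
  by_contra hgc
  -- discontinuity data
  obtain ⟨x₀, ε, hε, hfreq⟩ : ∃ x₀, ∃ ε > 0, ∃ᶠ y in 𝓝 x₀, ε ≤ |g y - g x₀| := by
    rw [continuous_iff_continuousAt] at hgc
    push_neg at hgc
    obtain ⟨x₀, hx₀⟩ := hgc
    rw [ContinuousAt, Metric.tendsto_nhds] at hx₀
    push_neg at hx₀
    obtain ⟨ε, hε', h⟩ := hx₀
    refine ⟨x₀, ε, hε', h.mono fun y hy => ?_⟩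
    rwa [Real.dist_eq] at hy
  -- A is nonempty
  obtain ⟨f₀, hf₀A, -⟩ := exists_approx hg Set.finite_empty one_pos
  -- the recursive step
  have hstep : ∀ (n : ℕ) (p : ℕ → Cp K × K), ∃ fx : Cp K × K, fx.1 ∈ A ∧
      (∀ j < n, |fx.1.1 ((p j).2) - g ((p j).2)| < 1/(n+1)) ∧
      |fx.1.1 x₀ - g x₀| < 1/(n+1) ∧
      (ε ≤ |g fx.2 - g x₀|) ∧
      (∀ j < n, |(p j).1.1 fx.2 - (p j).1.1 x₀| < 1/(n+1)) ∧
      |fx.1.1 fx.2 - fx.1.1 x₀| < 1/(n+1) := by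
    intro n p
    have hδ : (0:ℝ) < 1/(n+1) := by positivity
    have hSfin : (insert x₀ ((fun j => (p j).2) '' Set.Iio n)).Finite :=
      ((Set.finite_Iio n).image _).insert x₀
    obtain ⟨f, hfA, hf⟩ := exists_approx hg hSfin hδ
    -- choose the point
    set U : Set K := {y | (∀ j < n, |(p j).1.1 y - (p j).1.1 x₀| < 1/(n+1)) ∧
        |f.1 y - f.1 x₀| < 1/(n+1)} with hUdef
    have hUopen : IsOpen U := by
      have : U = (⋂ j ∈ Set.Iio n,
          {y | |(p j).1.1 y - (p j).1.1 x₀| < 1/(n+1)}) ∩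
          ((f.1) ⁻¹' Metric.ball (f.1 x₀) (1/(n+1))) := by
        ext y; simp [hUdef, Metric.mem_ball, Real.dist_eq]
      rw [this]
      refine IsOpen.inter ?_ ((Metric.isOpen_ball).preimage f.2)
      refine (Set.finite_Iio n).isOpen_biInter fun j _ => ?_
      have : {y | |(p j).1.1 y - (p j).1.1 x₀| < 1/(n+1)}
          = ((p j).1.1) ⁻¹' Metric.ball ((p j).1.1 x₀) (1/(n+1)) := by
        ext y; simp [Metric.mem_ball, Real.dist_eq]
      rw [this]
      exact (Metric.isOpen_ball).preimage (p j).1.2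
    have hUx₀ : U ∈ 𝓝 x₀ := hUopen.mem_nhds ⟨fun j _ => by simpa using hδ, by simpa using hδ⟩
    obtain ⟨y, hy1, hy2⟩ := (hfreq.and_eventually (eventually_of_mem hUx₀ fun z hz => hz)).exists
    refine ⟨(f, y), hfA, ?_, ?_, hy1, hy2.1, hy2.2⟩
    · intro j hj
      exact hf _ (Set.mem_insert_of_mem _ ⟨j, hj, rfl⟩)
    · exact hf _ (Set.mem_insert _ _)
  choose step hsA hs1 hs2 hs3 hs4 hs5 using hstep
  set q : ℕ → Cp K × K := mkSeq step (f₀, x₀) with hq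
  set f : ℕ → Cp K := fun n => (q n).1 with hfdef
  set x : ℕ → K := fun n => (q n).2 with hxdef
  have hqn : ∀ n, q n = step n (preSeq step (f₀, x₀) n) := fun n => mkSeq_eq step _ n
  have hpre : ∀ n j, j < n → preSeq step (f₀, x₀) n j = q j :=
    fun n j hj => preSeq_eq_mkSeq step _ n j hj
  -- properties of the sequence
  have hA : ∀ n, f n ∈ A := fun n => by rw [hfdef]; simp only; rw [hqn n]; exact hsA n _
  have h1 : ∀ n, ∀ j < n, |(f n).1 (x j) - g (x j)| < 1/(n+1) := by
    intro n j hj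
    have := hs1 n (preSeq step (f₀, x₀) n) j hj
    rw [hpre n j hj] at this
    simpa [hfdef, hxdef, hqn n] using this
  have h2 : ∀ n, |(f n).1 x₀ - g x₀| < 1/(n+1) := by
    intro n
    have := hs2 n (preSeq step (f₀, x₀) n)
    simpa [hfdef, hqn n] using this
  have h3 : ∀ n, ε ≤ |g (x n) - g x₀| := by
    intro n
    have := hs3 n (preSeq step (f₀, x₀) n)
    simpa [hxdef, hqn n] using this
  have h4 : ∀ n, ∀ j < n, |(f j).1 (x n) - (f j).1 x₀| < 1/(n+1) := by
    intro n j hj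
    have := hs4 n (preSeq step (f₀, x₀) n) j hj
    rw [hpre n j hj] at this
    simpa [hfdef, hxdef, hqn n] using this
  have h5 : ∀ n, |(f n).1 (x n) - (f n).1 x₀| < 1/(n+1) := by
    intro n
    have := hs5 n (preSeq step (f₀, x₀) n)
    simpa [hfdef, hxdef, hqn n] using this
  -- cluster points
  obtain ⟨h, hclus⟩ := hcc f hA
  obtain ⟨xs, hxs⟩ := exists_clusterPt_of_compactSpace (map x atTop)
  have hxclus : MapClusterPt xs atTop x := hxs
  -- (f j) xs = (f j) x₀ for all j
  have hfx : ∀ j, (f j).1 xs = (f j).1 x₀ := by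
    intro j
    have hc : MapClusterPt ((f j).1 xs) atTop ((f j).1 ∘ x) :=
      hxclus.continuousAt_comp (f j).2.continuousAt
    refine cluster_eq hc (tendsto_of_abs_lt (N := j+1) fun n hn => ?_)
    exact h4 n j hn
  -- h xs = g x₀
  have hhxs : h.1 xs = g x₀ := by
    have hc : MapClusterPt (h.1 xs) atTop ((fun u : Cp K => u.1 xs) ∘ f) :=
      hclus.continuousAt_comp (continuous_eval xs).continuousAt
    have heq : ((fun u : Cp K => u.1 xs) ∘ f) = fun j => (f j).1 x₀ := by
      funext j; exact hfx j
    rw [heq] at hc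
    refine cluster_eq hc (tendsto_of_abs_lt (N := 0) fun n _ => h2 n)
  -- h (x n) = g (x n)
  have hhxn : ∀ n, h.1 (x n) = g (x n) := by
    intro n
    have hc : MapClusterPt (h.1 (x n)) atTop ((fun u : Cp K => u.1 (x n)) ∘ f) :=
      hclus.continuousAt_comp (continuous_eval (x n)).continuousAt
    refine cluster_eq hc (tendsto_of_abs_lt (N := n+1) fun m hm => ?_)
    exact h1 m n hm
  -- h xs is a cluster point of h (x n), all of which are ε-far from g x₀
  have hc2 : MapClusterPt (h.1 xs) atTop (h.1 ∘ x) :=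
    hxclus.continuousAt_comp h.2.continuousAt
  have hmem : h.1 xs ∈ {t : ℝ | ε ≤ |t - g x₀|} := by
    refine cluster_mem_closed hc2 (isClosed_eps ε (g x₀)) fun n => ?_
    show ε ≤ |h.1 (x n) - g x₀|
    rw [hhxn n]
    exact h3 n
  rw [hhxs] at hmem
  simp only [Set.mem_setOf_eq, sub_self, abs_zero] at hmem
  linarith

lemma pointwise_bounded {A : Set (Cp K)}
    (hcc : ∀ u : ℕ → Cp K, (∀ n, u n ∈ A) → ∃ h : Cp K, MapClusterPt h atTop u)
    (z : K) : ∃ M : ℝ, ∀ f ∈ A, |f.1 z| ≤ M := by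
  by_contra hb
  push_neg at hb
  have : ∀ n : ℕ, ∃ f : Cp K, f ∈ A ∧ (n:ℝ) < |f.1 z| := by
    intro n
    obtain ⟨f, hfA, hf⟩ := hb n
    exact ⟨f, hfA, hf⟩
  choose u huA hu using this
  obtain ⟨h, hclus⟩ := hcc u huA
  have hc : MapClusterPt (h.1 z) atTop ((fun v : Cp K => v.1 z) ∘ u) :=
    hclus.continuousAt_comp (continuous_eval z).continuousAt
  have hfreq : ∃ᶠ n in atTop, |( (u n).1 z) - h.1 z| < 1 := by
    have := (mapClusterPt_iff_frequently.1 hc) (Metric.ball (h.1 z) 1) (Metric.ball_mem_nhds _ one_pos)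
    exact this.mono fun n hn => by simpa [Metric.mem_ball, Real.dist_eq] using hn
  have hev : ∀ᶠ n : ℕ in atTop, |h.1 z| + 1 ≤ (n:ℝ) :=
    tendsto_natCast_atTop_atTop.eventually_ge_atTop (|h.1 z| + 1)
  obtain ⟨n, hn1, hn2⟩ := (hfreq.and_eventually hev).exists
  have := hu n
  have habs : |(u n).1 z| - |h.1 z| ≤ |(u n).1 z - h.1 z| := abs_sub_abs_le_abs_sub _ _
  linarith

end Stmt19Aux

open Stmt19Aux

/-- angelicity of `(C(K), τ_p)` for compact `K`: every relatively
countably compact subset `A` of `(C(K), τ_p)` is relatively compact, and every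
point of its closure is the `τ_p`-limit of a sequence from `A`. -/
theorem stmt19 (K : Type*) [TopologicalSpace K] [CompactSpace K] [T2Space K]
    (A : Set (Cp K))
    -- `A` is relatively countably compact in `(C(K), τ_p)`:
    (hcc : ∀ u : ℕ → Cp K, (∀ n, u n ∈ A) → ∃ h : Cp K, MapClusterPt h atTop u) :
    -- `A` is relatively compact ...
    IsCompact (closure A) ∧
    -- ... and the closure of `A` is its sequential closure:
    ∀ g ∈ closure A, ∃ u : ℕ → Cp K, (∀ n, u n ∈ A) ∧ Tendsto u atTop (𝓝 g) := by
  classical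
  set e : Cp K → (K → ℝ) := fun h => h.1 with he
  set B : Set (K → ℝ) := e '' A with hB
  choose M hM using pointwise_bounded hcc (A := A)
  -- the pointwise closure is compact
  have hScpt : IsCompact (Set.pi Set.univ fun z : K => Set.Icc (-(M z)) (M z)) :=
    isCompact_univ_pi fun z => isCompact_Icc
  have hBsub : B ⊆ Set.pi Set.univ fun z => Set.Icc (-(M z)) (M z) := by
    rintro u ⟨f, hfA, rfl⟩ z _
    exact abs_le.1 (hM z f hfA)
  have hclB : IsCompact (closure B) := by
    refine hScpt.of_isClosed_subset isClosed_closure ?_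
    refine closure_minimal hBsub (isClosed_set_pi fun z _ => isClosed_Icc)
  -- identify closure A with closure B
  have hval : IsInducing e := inducing_val
  have hclosA : closure A = e ⁻¹' closure B := hval.closure_eq_preimage_closure_image A
  have himg : e '' closure A = closure B := by
    apply Set.Subset.antisymm
    · rw [hclosA]; exact Set.image_preimage_subset _ _
    · intro u hu
      have hcont : Continuous u := continuous_of_mem_closure hcc hu
      refine ⟨⟨u, hcont⟩, ?_, rfl⟩
      rw [hclosA]; exact hu
  have hcompact : IsCompact (closure A) := by
    rw [embedding_val.isCompact_iff]
    rw [show (fun h : Cp K => h.1) '' closure A = e '' closure A from rfl, himg]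
    exact hclB
  refine ⟨hcompact, ?_⟩
  intro g hgcl
  have hgB : e g ∈ closure B := by rw [hclosA] at hgcl; exact hgcl
  obtain ⟨f₀, hf₀A, -⟩ := exists_approx hgB Set.finite_empty one_pos
  -- recursive construction of the approximating sequence together with finite nets
  have hstep : ∀ (n : ℕ) (p : ℕ → Cp K × Finset K), ∃ fT : Cp K × Finset K,
      fT.1 ∈ A ∧
      (∀ x : K, ∃ y ∈ fT.2, |g.1 x - g.1 y| < 1/(n+1) ∧
        ∀ j < n, |(p j).1.1 x - (p j).1.1 y| < 1/(n+1)) ∧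
      (∀ y : K, (y ∈ fT.2 ∨ ∃ j < n, y ∈ (p j).2) → |fT.1.1 y - g.1 y| < 1/(n+1)) := by
    intro n p
    have hδ : (0:ℝ) < 1/(n+1) := by positivity
    set Φ : ℕ → K → ℝ := fun j => if j < n then (p j).1.1 else g.1 with hΦdef
    have hΦc : ∀ j, Continuous (Φ j) := by
      intro j
      rw [hΦdef]
      dsimp only
      split
      · exact (p _).1.2
      · exact g.2
    obtain ⟨T, hT⟩ := exists_net Φ hΦc n hδ
    set S : Set K := ↑T ∪ ⋃ j ∈ Finset.range n, ↑(p j).2 with hSdef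
    have hSfin : S.Finite := (T.finite_toSet).union
      (Set.Finite.biUnion (Finset.range n).finite_toSet fun j _ => (p j).2.finite_toSet)
    obtain ⟨f, hfA, hf⟩ := exists_approx hgB hSfin hδ
    refine ⟨(f, T), hfA, ?_, ?_⟩
    · intro x
      obtain ⟨y, hyT, hy⟩ := hT x
      refine ⟨y, hyT, ?_, ?_⟩
      · have := hy n le_rfl
        simpa [hΦdef] using this
      · intro j hj
        have := hy j (le_of_lt hj)
        simpa [hΦdef, hj] using this
    · intro y hy
      apply hf
      rcases hy with hyT | ⟨j, hj, hyj⟩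
      · exact Or.inl hyT
      · exact Or.inr (Set.mem_biUnion (Finset.mem_range.2 hj) hyj)
  choose step hsA hsnet hsapp using hstep
  set q : ℕ → Cp K × Finset K := mkSeq step (f₀, (∅ : Finset K)) with hq
  set f : ℕ → Cp K := fun n => (q n).1 with hfdef
  set T : ℕ → Finset K := fun n => (q n).2 with hTdef
  have hqn : ∀ n, q n = step n (preSeq step (f₀, ∅) n) := fun n => mkSeq_eq step _ n
  have hpre : ∀ n j, j < n → preSeq step (f₀, ∅) n j = q j :=
    fun n j hj => preSeq_eq_mkSeq step _ n j hj
  have hA : ∀ n, f n ∈ A := fun n => by rw [hfdef]; simp only; rw [hqn n]; exact hsA n _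
  have hnet : ∀ n, ∀ x : K, ∃ y ∈ T n, |g.1 x - g.1 y| < 1/(n+1) ∧
      ∀ j < n, |(f j).1 x - (f j).1 y| < 1/(n+1) := by
    intro n x
    obtain ⟨y, hyT, hy1, hy2⟩ := hsnet n (preSeq step (f₀, ∅) n) x
    refine ⟨y, ?_, hy1, fun j hj => ?_⟩
    · show y ∈ (q n).2
      rw [hqn n]; exact hyT
    · have := hy2 j hj
      rwa [hpre n j hj] at this
  have happ : ∀ n, ∀ j ≤ n, ∀ y ∈ T j, |(f n).1 y - g.1 y| < 1/(n+1) := by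
    intro n j hj y hy
    have hy' : y ∈ (step n (preSeq step (f₀, ∅) n)).2 ∨
        ∃ i < n, y ∈ (preSeq step (f₀, ∅) n i).2 := by
      rcases eq_or_lt_of_le hj with h | hlt
      · left
        subst h
        have : y ∈ (q j).2 := hy
        rwa [hqn j] at this
      · right
        exact ⟨j, hlt, by rw [hpre n j hlt]; exact hy⟩
    have := hsapp n (preSeq step (f₀, ∅) n) y hy'
    have hfn : f n = (step n (preSeq step (f₀, ∅) n)).1 := by
      rw [hfdef]; simp only; rw [hqn n]
    rwa [hfn]
  -- the sequence converges to g pointwise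
  refine ⟨f, hA, ?_⟩
  rw [hval.tendsto_nhds_iff, tendsto_pi_nhds]
  intro x
  by_contra hnot
  rw [Metric.tendsto_atTop] at hnot
  push_neg at hnot
  obtain ⟨ε, hε, hNn⟩ := hnot
  have hfr : ∃ᶠ n in atTop, ε ≤ |(f n).1 x - g.1 x| := by
    rw [frequently_atTop]
    intro N
    obtain ⟨n, hnN, hn⟩ := hNn N
    exact ⟨n, hnN, by rwa [Real.dist_eq] at hn⟩
  obtain ⟨φ, hφmono, hφ⟩ := extraction_of_frequently_atTop hfr
  obtain ⟨h, hclus⟩ := hcc (f ∘ φ) fun k => hA (φ k)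
  -- choose net points close to x
  choose y hyT hy1 hy2 using fun n => hnet n x
  obtain ⟨xs, hxs⟩ := exists_clusterPt_of_compactSpace (map y atTop)
  have hyclus : MapClusterPt xs atTop y := hxs
  -- (f j) xs = (f j) x for every j
  have hfx : ∀ j, (f j).1 xs = (f j).1 x := by
    intro j
    have hc : MapClusterPt ((f j).1 xs) atTop ((f j).1 ∘ y) :=
      hyclus.continuousAt_comp (f j).2.continuousAt
    refine cluster_eq hc (tendsto_of_abs_lt (N := j+1) fun n hn => ?_)
    rw [abs_sub_comm]
    exact hy2 n j hn
  -- h (y n) = g (y n) for every n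
  have hhy : ∀ n, h.1 (y n) = g.1 (y n) := by
    intro n
    have hc : MapClusterPt (h.1 (y n)) atTop ((fun v : Cp K => v.1 (y n)) ∘ (f ∘ φ)) :=
      hclus.continuousAt_comp (continuous_eval (y n)).continuousAt
    have hbase : Tendsto (fun m => (f m).1 (y n)) atTop (𝓝 (g.1 (y n))) :=
      tendsto_of_abs_lt (N := n) fun m hm => happ m n hm (y n) (hyT n)
    exact cluster_eq hc (hbase.comp hφmono.tendsto_atTop)
  -- h xs = g x
  have hhxs : h.1 xs = g.1 x := by
    have hc : MapClusterPt (h.1 xs) atTop (h.1 ∘ y) :=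
      hyclus.continuousAt_comp h.2.continuousAt
    have heq : (h.1 ∘ y) = fun n => g.1 (y n) := funext fun n => hhy n
    rw [heq] at hc
    refine cluster_eq hc (tendsto_of_abs_lt (N := 0) fun n _ => ?_)
    rw [abs_sub_comm]
    exact hy1 n
  -- but h xs is a cluster point of values ε-far from g x
  have hc : MapClusterPt (h.1 xs) atTop ((fun v : Cp K => v.1 xs) ∘ (f ∘ φ)) :=
    hclus.continuousAt_comp (continuous_eval xs).continuousAt
  have heq : ((fun v : Cp K => v.1 xs) ∘ (f ∘ φ)) = fun k => (f (φ k)).1 x :=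
    funext fun k => hfx (φ k)
  rw [heq] at hc
  have hmem : h.1 xs ∈ {t : ℝ | ε ≤ |t - g.1 x|} :=
    cluster_mem_closed hc (isClosed_eps ε (g.1 x)) fun k => hφ k
  rw [hhxs] at hmem
  simp only [Set.mem_setOf_eq, sub_self, abs_zero] at hmem
  linarith
end
end
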